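/- Let 1 ≤ t < k and n > 2k. If an intersecting family F of k-element subsets of [n] with maximal degree Δ and diversity γ satisfies Δ + (k/(k−t))·γ ≤ (1 − Π_{i=1}^{k} (n−k+1−i)/(n−t−i))·C(n−1,k−1), then δ_t(F) ≤ C(n−t−1, k−t−1) − C(n−t−k−1, k−t−1). -/

import Mathlib

open Finset

def IntersectingFam (F : Finset (Finset ℕ)) : Prop :=
  ∀ A ∈ F, ∀ B ∈ F, (A ∩ B).Nonempty

def CrossIntersecting (𝒜 ℬ : Finset (Finset ℕ)) : Prop :=
  ∀ A ∈ 𝒜, ∀ B ∈ ℬ, (A ∩ B).Nonempty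

/-- The degree of an element `i`: the number of sets of `F` containing `i`. -/
def famDeg (F : Finset (Finset ℕ)) (i : ℕ) : ℕ := (F.filter (fun A => i ∈ A)).card

/-- The maximal degree `Δ(F)` over the ground set `[n]`. -/
def maxDeg (n : ℕ) (F : Finset (Finset ℕ)) : ℕ := (Finset.Icc 1 n).sup (famDeg F)

/-- The diversity `γ(F) = |F| − Δ(F)`. -/
def diversity (n : ℕ) (F : Finset (Finset ℕ)) : ℕ := F.card - maxDeg n F

/-- The degree of a subset `S`: the number of sets of `F` containing `S`. -/
def tDeg (F : Finset (Finset ℕ)) (S : Finset ℕ) : ℕ := (F.filter (fun A => S ⊆ A)).card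

/-- Lexicographic order: `A ⪯ B` iff `A ⊇ B` or `min (A \ B) < min (B \ A)`. -/
def lexLE (A B : Finset ℕ) : Prop := B ⊆ A ∨ (A \ B).min < (B \ A).min

instance : DecidableRel lexLE := fun A B => by unfold lexLE; exact inferInstance

def lexLT (A B : Finset ℕ) : Prop := lexLE A B ∧ A ≠ B

/-- Lex family with characteristic set `X` on ground set `[2,n]`:
`L(X,a) = {A ⊆ [2,n] : |A| = a, A ⪯ X ∩ [2,n]}`. -/
def lexFam (n a : ℕ) (X : Finset ℕ) : Finset (Finset ℕ) :=
  ((Finset.Icc 2 n).powersetCard a).filter (fun A => lexLE A (X ∩ Finset.Icc 2 n))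

/-- Lex family with characteristic set `X` on ground set `[n]`:
`L(X,c) = {A ⊆ [n] : |A| = c, A ⪯ X}`. -/
def lexFam1 (n c : ℕ) (X : Finset ℕ) : Finset (Finset ℕ) :=
  ((Finset.Icc 1 n).powersetCard c).filter (fun A => lexLE A X)

/-- Resistant pairs for uniformity `k` on ground set `[n]`. -/
def ResistantPair (n k : ℕ) (S T : Finset ℕ) : Prop :=
  (S = ({1, 4} : Finset ℕ) ∧ T = ({2, 3, 4} : Finset ℕ)) ∨
  (1 ∈ S ∧ S ⊆ Finset.Icc 1 n ∧ T ⊆ Finset.Icc 2 n ∧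
    ∃ j : ℕ, T.max = (j : WithTop ℕ) ∧ S ∩ T = {j} ∧ S ∪ T = Finset.Icc 1 j ∧
      S.card ≤ k ∧ T.card ≤ k ∧
      ∀ i : ℕ, 4 ≤ i → i ≤ j → (Finset.Icc 1 i ∩ S).card < (Finset.Icc 1 i \ S).card)

/-- `(a,b)`-resistant pairs on ground set `[n]`. -/
def ABResistantPair (n a b : ℕ) (S T : Finset ℕ) : Prop :=
  (T = Finset.Icc 1 (b - a + 2) ∧ S = ({1, b - a + 2} : Finset ℕ)) ∨
  (S ⊆ Finset.Icc 1 n ∧ T ⊆ Finset.Icc 1 n ∧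
    ∃ j : ℕ, T.max = (j : WithTop ℕ) ∧ S ∩ T = {j} ∧ S ∪ T = Finset.Icc 1 j ∧
      S.card ≤ a ∧ T.card ≤ b ∧
      ∀ i : ℕ, b - a + 2 ≤ i → i ≤ j →
        ((Finset.Icc 1 i ∩ S).card : ℤ) - (a : ℤ) < ((Finset.Icc 1 i \ S).card : ℤ) - (b : ℤ))

/-- Resistant numbers: `γ` is resistant if in its `(n−k−1)`-cascade form
`γ = Σ_{i=1}^s C(n−b_i, n−k−i)` (with `1 ≤ b_1 < … < b_s`) one has `|S_γ| ≤ k`,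
`s ≤ k−1` and `b_i > 2i+2` for each `i`; in addition `C(n−4,k−3)` is resistant. -/
def IsResistantNum (n k γ : ℕ) : Prop :=
  γ = Nat.choose (n - 4) (k - 3) ∨
  ∃ (s : ℕ) (b : ℕ → ℕ), 1 ≤ s ∧ 1 ≤ b 1 ∧
    (∀ i j, 1 ≤ i → i < j → j ≤ s → b i < b j) ∧
    γ = ∑ i ∈ Finset.Icc 1 s, Nat.choose (n - b i) (n - k - i) ∧
    s ≤ k - 1 ∧
    (insert (b s) (Finset.Icc 2 (b s) \ (Finset.Icc 1 s).image b)).card ≤ k ∧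
    (∀ i, 1 ≤ i → i ≤ s → b i > 2 * i + 2)

/-- The family `J_i`. -/
def Jfam (n k i : ℕ) : Finset (Finset ℕ) :=
  {Finset.Icc 2 (k+1), Finset.Icc (i+1) (k+i)} ∪
    ((Finset.Icc 1 n).powersetCard k).filter
      (fun F => 1 ∈ F ∧ (F ∩ Finset.Icc 2 (k+1)).Nonempty ∧ (F ∩ Finset.Icc (i+1) (k+i)).Nonempty)

/-- Two families are isomorphic if one is obtained from the other by a permutation
of the ground set `[n]`. -/
def IsomorphicFam (n : ℕ) (F G : Finset (Finset ℕ)) : Prop :=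
  ∃ σ : Equiv.Perm ℕ, (Finset.Icc 1 n).image σ = Finset.Icc 1 n ∧
    F.image (fun A => A.image σ) = G

/-- `F` is isomorphic to a subfamily of `G`. -/
def IsoSubfamily (n : ℕ) (F G : Finset (Finset ℕ)) : Prop :=
  ∃ σ : Equiv.Perm ℕ, (Finset.Icc 1 n).image σ = Finset.Icc 1 n ∧
    F.image (fun A => A.image σ) ⊆ G

/-- `L` is an initial segment of the lex order on `k`-subsets of `[2,n]`. -/
def IsInitialSeg (n k : ℕ) (L : Finset (Finset ℕ)) : Prop :=
  L ⊆ (Finset.Icc 2 n).powersetCard k ∧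
  ∀ A ∈ L, ∀ B ∈ (Finset.Icc 2 n).powersetCard k, lexLE B A → B ∈ L

/-- The maximal intersecting family `F_l` whose sets avoiding `1` are exactly `L`. -/
def maxFam (n k : ℕ) (L : Finset (Finset ℕ)) : Finset (Finset ℕ) :=
  L ∪ ((Finset.Icc 1 n).powersetCard k).filter
    (fun A => 1 ∈ A ∧ ∀ B ∈ L, (A ∩ B).Nonempty)

/-- The sets `T` allowed in the recursive definition of a `T_l`-neutral pair:
`T_l` is allowed, and whenever `T'` is allowed so is `T' ∪ {2|T'|}`. -/
inductive NeutralSet (T0 : Finset ℕ) : Finset ℕ → Prop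
  | base : NeutralSet T0 T0
  | step (T' : Finset ℕ) : NeutralSet T0 T' → NeutralSet T0 (insert (2 * T'.card) T')

/-- The family `A_0(n,k,s)`. -/
def A0fam (n k s : ℕ) : Finset (Finset ℕ) :=
  ((Finset.Icc 1 n).powersetCard k).filter (fun A => (A ∩ Finset.Icc 1 s).Nonempty)

lemma aux_prod (m k : ℕ) (h : k < m) :
    (m - k - 1).factorial * ∏ i ∈ Finset.Icc 1 k, (m - i) = (m - 1).factorial := by
  induction k with
  | zero => simp
  | succ k ih =>
    have hk : k < m := Nat.lt_of_succ_lt h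
    rw [Finset.prod_Icc_succ_top (by omega : 1 ≤ k + 1) (fun i => m - i)]
    have e1 : m - k - 1 = (m - (k+1) - 1) + 1 := by omega
    have e2 : m - (k+1) - 1 + 1 = m - (k + 1) := by omega
    calc (m - (k+1) - 1).factorial * ((∏ i ∈ Finset.Icc 1 k, (m - i)) * (m - (k+1)))
        = ((m - (k+1)) * (m - (k+1) - 1).factorial) * ∏ i ∈ Finset.Icc 1 k, (m - i) := by ring
      _ = (m - k - 1).factorial * ∏ i ∈ Finset.Icc 1 k, (m - i) := by
          rw [e1, Nat.factorial_succ, e2]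
      _ = (m - 1).factorial := ih hk

lemma aux_keyB (n k t : ℕ) (ht : 1 ≤ t) (htk : t < k) (hn : 2 * k < n) :
    (∏ i ∈ Finset.Icc 1 k,
        ((n : ℚ) - (k : ℚ) + 1 - (i : ℚ)) / ((n : ℚ) - (t : ℚ) - (i : ℚ))) *
      (Nat.choose (n - 1) (k - 1) : ℚ) * (Nat.choose (k - 1) t : ℚ)
    = (Nat.choose (n - t - k - 1) (k - t - 1) : ℚ) * (Nat.choose (n - 1) t : ℚ) := by
  have hNum : ∏ i ∈ Finset.Icc 1 k, ((n : ℚ) - (k : ℚ) + 1 - (i : ℚ))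
      = ((∏ i ∈ Finset.Icc 1 k, (n - k + 1 - i) : ℕ) : ℚ) := by
    rw [Nat.cast_prod]
    refine Finset.prod_congr rfl ?_
    intro i hi
    simp only [Finset.mem_Icc] at hi
    have h1 : k ≤ n := by omega
    have h2 : i ≤ n - k + 1 := by omega
    rw [Nat.cast_sub h2, Nat.cast_add, Nat.cast_sub h1]
    push_cast
    ring
  have hDen : ∏ i ∈ Finset.Icc 1 k, ((n : ℚ) - (t : ℚ) - (i : ℚ))
      = ((∏ i ∈ Finset.Icc 1 k, (n - t - i) : ℕ) : ℚ) := by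
    rw [Nat.cast_prod]
    refine Finset.prod_congr rfl ?_
    intro i hi
    simp only [Finset.mem_Icc] at hi
    have h1 : t ≤ n := by omega
    have h2 : i ≤ n - t := by omega
    rw [Nat.cast_sub h2, Nat.cast_sub h1]
  have f1 : (n - 2 * k).factorial * ∏ i ∈ Finset.Icc 1 k, (n - k + 1 - i)
      = (n - k).factorial := by
    have h := aux_prod (n - k + 1) k (by omega)
    have e1 : n - k + 1 - k - 1 = n - 2 * k := by omega
    have e2 : n - k + 1 - 1 = n - k := by omega
    rw [e1, e2] at h
    exact h
  have f2 : (n - t - k - 1).factorial * ∏ i ∈ Finset.Icc 1 k, (n - t - i)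
      = (n - t - 1).factorial := by
    exact aux_prod (n - t) k (by omega)
  have q1 : ((n - 2 * k).factorial : ℚ) * ((∏ i ∈ Finset.Icc 1 k, (n - k + 1 - i) : ℕ) : ℚ)
      = ((n - k).factorial : ℚ) := by exact_mod_cast congrArg (fun x : ℕ => (x : ℚ)) f1
  have q2 : ((n - t - k - 1).factorial : ℚ) * ((∏ i ∈ Finset.Icc 1 k, (n - t - i) : ℕ) : ℚ)
      = ((n - t - 1).factorial : ℚ) := by exact_mod_cast congrArg (fun x : ℕ => (x : ℚ)) f2
  have hfac_ne : ∀ m : ℕ, ((m.factorial : ℚ)) ≠ 0 := fun m => by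
    exact_mod_cast m.factorial_ne_zero
  have hNumEq : ((∏ i ∈ Finset.Icc 1 k, (n - k + 1 - i) : ℕ) : ℚ)
      = ((n - k).factorial : ℚ) / ((n - 2 * k).factorial : ℚ) := by
    rw [eq_div_iff (hfac_ne _)]
    linear_combination q1
  have hDenEq : ((∏ i ∈ Finset.Icc 1 k, (n - t - i) : ℕ) : ℚ)
      = ((n - t - 1).factorial : ℚ) / ((n - t - k - 1).factorial : ℚ) := by
    rw [eq_div_iff (hfac_ne _)]
    linear_combination q2
  have c1 : ((Nat.choose (n - 1) (k - 1)) : ℚ)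
      = ((n - 1).factorial : ℚ) / (((k - 1).factorial : ℚ) * ((n - k).factorial : ℚ)) := by
    rw [Nat.cast_choose ℚ (by omega : k - 1 ≤ n - 1)]
    have e : n - 1 - (k - 1) = n - k := by omega
    rw [e]
  have c2 : ((Nat.choose (k - 1) t) : ℚ)
      = ((k - 1).factorial : ℚ) / ((t.factorial : ℚ) * ((k - t - 1).factorial : ℚ)) := by
    rw [Nat.cast_choose ℚ (by omega : t ≤ k - 1)]
    have e : k - 1 - t = k - t - 1 := by omega
    rw [e]
  have c3 : ((Nat.choose (n - t - k - 1) (k - t - 1)) : ℚ)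
      = ((n - t - k - 1).factorial : ℚ)
        / (((k - t - 1).factorial : ℚ) * ((n - 2 * k).factorial : ℚ)) := by
    rw [Nat.cast_choose ℚ (by omega : k - t - 1 ≤ n - t - k - 1)]
    have e : n - t - k - 1 - (k - t - 1) = n - 2 * k := by omega
    rw [e]
  have c4 : ((Nat.choose (n - 1) t) : ℚ)
      = ((n - 1).factorial : ℚ) / ((t.factorial : ℚ) * ((n - t - 1).factorial : ℚ)) := by
    rw [Nat.cast_choose ℚ (by omega : t ≤ n - 1)]
    have e : n - 1 - t = n - t - 1 := by omega
    rw [e]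
  rw [Finset.prod_div_distrib, hNum, hDen, hNumEq, hDenEq, c1, c2, c3, c4]
  have h1 := hfac_ne (n - 2 * k)
  have h2 := hfac_ne (n - t - k - 1)
  have h3 := hfac_ne (k - 1)
  have h4 := hfac_ne (n - k)
  have h5 := hfac_ne t
  have h6 := hfac_ne (k - t - 1)
  have h7 := hfac_ne (n - t - 1)
  field_simp

/-- the Hilton–Milner analogue of Proposition `stat1`. -/
theorem statement18 (n k t : ℕ) (ht : 1 ≤ t) (htk : t < k) (hn : 2 * k < n)
    (F : Finset (Finset ℕ)) (hF : F ⊆ (Finset.Icc 1 n).powersetCard k)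
    (hint : IntersectingFam F)
    (hcond : (maxDeg n F : ℚ) +
        (k : ℚ) / ((k : ℚ) - (t : ℚ)) * (diversity n F : ℚ) ≤
      (1 - ∏ i ∈ Finset.Icc 1 k,
          ((n : ℚ) - (k : ℚ) + 1 - (i : ℚ)) / ((n : ℚ) - (t : ℚ) - (i : ℚ))) *
        (Nat.choose (n - 1) (k - 1) : ℚ)) :
    ∃ S ∈ (Finset.Icc 1 n).powersetCard t,
      tDeg F S ≤ Nat.choose (n - t - 1) (k - t - 1) -
        Nat.choose (n - t - k - 1) (k - t - 1) := by
  by_contra hcon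
  push_neg at hcon
  set M := Nat.choose (n - t - 1) (k - t - 1) - Nat.choose (n - t - k - 1) (k - t - 1) with hM
  -- a vertex of maximal degree
  have hne : (Finset.Icc 1 n).Nonempty := ⟨1, Finset.mem_Icc.mpr ⟨le_rfl, by omega⟩⟩
  obtain ⟨v, hv, hvd⟩ := Finset.exists_mem_eq_sup (Finset.Icc 1 n) hne (famDeg F)
  set D := famDeg F v with hD
  have hmaxD : maxDeg n F = D := hvd
  have hDle : D ≤ F.card := Finset.card_filter_le _ _
  have hdiv : diversity n F = F.card - D := by rw [diversity, hmaxD]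
  set W := (Finset.Icc 1 n).erase v with hW
  have hWcard : W.card = n - 1 := by
    rw [hW, Finset.card_erase_of_mem hv, Nat.card_Icc]
    omega
  set 𝒮 := W.powersetCard t with h𝒮
  have hScard : 𝒮.card = Nat.choose (n - 1) t := by
    rw [h𝒮, Finset.card_powersetCard, hWcard]
  -- every t-set has degree at least M+1
  have hlow : ∀ S ∈ 𝒮, M + 1 ≤ tDeg F S := by
    intro S hS
    have hS' : S ∈ (Finset.Icc 1 n).powersetCard t :=
      Finset.powersetCard_mono (Finset.erase_subset _ _) hS
    exact hcon S hS'
  have hsum1 : (Nat.choose (n - 1) t) * (M + 1) ≤ ∑ S ∈ 𝒮, tDeg F S := by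
    calc (Nat.choose (n - 1) t) * (M + 1) = 𝒮.card • (M + 1) := by
          rw [hScard, smul_eq_mul]
      _ ≤ ∑ S ∈ 𝒮, tDeg F S := Finset.card_nsmul_le_sum 𝒮 _ _ hlow
  -- double counting
  have hswap : ∑ S ∈ 𝒮, tDeg F S = ∑ A ∈ F, (𝒮.filter (fun S => S ⊆ A)).card := by
    simp only [tDeg, Finset.card_filter]
    exact Finset.sum_comm
  have hinner : ∀ A ∈ F, (𝒮.filter (fun S => S ⊆ A)).card
      = Nat.choose (A.erase v).card t := by
    intro A hA
    have hAsub : A ⊆ Finset.Icc 1 n := (Finset.mem_powersetCard.mp (hF hA)).1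
    have hset : 𝒮.filter (fun S => S ⊆ A) = (A.erase v).powersetCard t := by
      ext S
      simp only [h𝒮, hW, Finset.mem_filter, Finset.mem_powersetCard]
      constructor
      · rintro ⟨⟨hSW, hSc⟩, hSA⟩
        refine ⟨Finset.subset_erase.mpr ⟨hSA, fun hvS => ?_⟩, hSc⟩
        exact (Finset.mem_erase.mp (hSW hvS)).1 rfl
      · rintro ⟨hSA, hSc⟩
        obtain ⟨hSA', hvS⟩ := Finset.subset_erase.mp hSA
        exact ⟨⟨Finset.subset_erase.mpr ⟨hSA'.trans hAsub, hvS⟩, hSc⟩, hSA'⟩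
    rw [hset, Finset.card_powersetCard]
  -- split according to membership of v
  have hsplit : ∑ A ∈ F, Nat.choose (A.erase v).card t
      = D * Nat.choose (k - 1) t + (F.card - D) * Nat.choose k t := by
    rw [← Finset.sum_filter_add_sum_filter_not F (fun A => v ∈ A)]
    have hDcard : (F.filter (fun A => v ∈ A)).card = D := by rw [hD, famDeg]
    have htot := Finset.card_filter_add_card_filter_not
      (s := F) (p := fun A => v ∈ A)
    have hpart1 : ∑ A ∈ F.filter (fun A => v ∈ A), Nat.choose (A.erase v).card t
        = D * Nat.choose (k - 1) t := by
      have hc : ∀ A ∈ F.filter (fun A => v ∈ A),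
          Nat.choose (A.erase v).card t = Nat.choose (k - 1) t := by
        intro A hA
        obtain ⟨hAF, hvA⟩ := Finset.mem_filter.mp hA
        rw [Finset.card_erase_of_mem hvA, (Finset.mem_powersetCard.mp (hF hAF)).2]
      rw [Finset.sum_congr rfl hc, Finset.sum_const, smul_eq_mul, hDcard]
    have hpart2 : ∑ A ∈ F.filter (fun A => ¬ v ∈ A), Nat.choose (A.erase v).card t
        = (F.card - D) * Nat.choose k t := by
      have hc : ∀ A ∈ F.filter (fun A => ¬ v ∈ A),
          Nat.choose (A.erase v).card t = Nat.choose k t := by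
        intro A hA
        obtain ⟨hAF, hvA⟩ := Finset.mem_filter.mp hA
        rw [Finset.erase_eq_of_notMem hvA, (Finset.mem_powersetCard.mp (hF hAF)).2]
      have hnc : (F.filter (fun A => ¬ v ∈ A)).card = F.card - D := by omega
      rw [Finset.sum_congr rfl hc, Finset.sum_const, smul_eq_mul, hnc]
    rw [hpart1, hpart2]
  have hnat : (Nat.choose (n - 1) t) * (M + 1)
      ≤ D * Nat.choose (k - 1) t + (F.card - D) * Nat.choose k t := by
    rw [← hsplit, ← Finset.sum_congr rfl hinner, ← hswap]
    exact hsum1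
  -- pass to the rationals
  have hq : ((Nat.choose (n - 1) t : ℚ)) * ((M : ℚ) + 1)
      ≤ (D : ℚ) * (Nat.choose (k - 1) t : ℚ)
        + ((F.card - D : ℕ) : ℚ) * (Nat.choose k t : ℚ) := by
    exact_mod_cast hnat
  have hMq : (M : ℚ) = (Nat.choose (n - t - 1) (k - t - 1) : ℚ)
      - (Nat.choose (n - t - k - 1) (k - t - 1) : ℚ) := by
    have hle : Nat.choose (n - t - k - 1) (k - t - 1)
        ≤ Nat.choose (n - t - 1) (k - t - 1) :=
      Nat.choose_le_choose _ (by omega)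
    rw [hM, Nat.cast_sub hle]
  -- binomial identities
  have keyA : (Nat.choose (n - 1) (k - 1)) * (Nat.choose (k - 1) t)
      = (Nat.choose (n - 1) t) * (Nat.choose (n - t - 1) (k - t - 1)) := by
    have h := Nat.choose_mul (n := n - 1) (k := k - 1) (s := t)
      (by omega)
    have e1 : n - 1 - t = n - t - 1 := by omega
    have e2 : k - 1 - t = k - t - 1 := by omega
    rw [e1, e2] at h
    exact h
  have keyAq : ((Nat.choose (n - 1) (k - 1)) : ℚ) * ((Nat.choose (k - 1) t) : ℚ)
      = ((Nat.choose (n - 1) t) : ℚ) * ((Nat.choose (n - t - 1) (k - t - 1)) : ℚ) := by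
    exact_mod_cast keyA
  have keyB := aux_keyB n k t ht htk hn
  have key : (1 - ∏ i ∈ Finset.Icc 1 k,
        ((n : ℚ) - (k : ℚ) + 1 - (i : ℚ)) / ((n : ℚ) - (t : ℚ) - (i : ℚ))) *
      (Nat.choose (n - 1) (k - 1) : ℚ) * (Nat.choose (k - 1) t : ℚ)
      = (M : ℚ) * (Nat.choose (n - 1) t : ℚ) := by
    rw [hMq]
    linear_combination keyAq - keyB
  -- relation between C(k,t) and C(k-1,t)
  have hktq : (0 : ℚ) < (k : ℚ) - (t : ℚ) := by
    have : (t : ℚ) < (k : ℚ) := by exact_mod_cast htk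
    linarith
  have hCkt : ((Nat.choose k t : ℚ)) * ((k : ℚ) - (t : ℚ))
      = (k : ℚ) * ((Nat.choose (k - 1) t) : ℚ) := by
    have h := Nat.choose_mul_succ_eq (k - 1) t
    have e : k - 1 + 1 = k := by omega
    rw [e] at h
    have h' := congrArg (fun x : ℕ => (x : ℚ)) h
    push_cast [Nat.cast_sub htk.le] at h'
    linarith
  have hdivCkt : (k : ℚ) / ((k : ℚ) - (t : ℚ)) * ((Nat.choose (k - 1) t) : ℚ)
      = (Nat.choose k t : ℚ) := by
    rw [div_mul_eq_mul_div, div_eq_iff (ne_of_gt hktq)]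
    linear_combination -hCkt
  have hCk1t_nonneg : (0 : ℚ) ≤ ((Nat.choose (k - 1) t) : ℚ) := by positivity
  have hCn1t_pos : (0 : ℚ) < ((Nat.choose (n - 1) t) : ℚ) := by
    exact_mod_cast Nat.choose_pos (by omega : t ≤ n - 1)
  -- multiply hcond by C(k-1,t)
  rw [hmaxD, hdiv] at hcond
  have h3 := mul_le_mul_of_nonneg_right hcond hCk1t_nonneg
  rw [key] at h3
  have hexpand : ((D : ℚ) + (k : ℚ) / ((k : ℚ) - (t : ℚ)) * ((F.card - D : ℕ) : ℚ))
        * ((Nat.choose (k - 1) t) : ℚ)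
      = (D : ℚ) * ((Nat.choose (k - 1) t) : ℚ)
        + ((F.card - D : ℕ) : ℚ)
          * ((k : ℚ) / ((k : ℚ) - (t : ℚ)) * ((Nat.choose (k - 1) t) : ℚ)) := by
    ring
  rw [hexpand, hdivCkt] at h3
  have hexp2 : ((Nat.choose (n - 1) t : ℚ)) * ((M : ℚ) + 1)
      = (M : ℚ) * (Nat.choose (n - 1) t : ℚ) + (Nat.choose (n - 1) t : ℚ) := by
    ring
  rw [hexp2] at hq
  linarith
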